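/- Let σ and σ' be coprime weight vectors, with coordinatewise product σσ'. Then the map f : P(σσ') → P(σ') × P(σ) given by f(w) = (e(σ'/σσ')(w), e(σ/σσ')(w)) is a homeomorphism onto the subspace P = {(z', z) ∈ P(σ') × P(σ) : e(1/σ')(z') = e(1/σ)(z) in ℂP^n}, equipped with the subspace topology of the product. In other words, the commutative square formed by e(σ'/σσ'), e(σ/σσ'), e(1/σ'), e(1/σ) is a pullback square of topological spaces. -/

import Mathlib

noncomputable section

/-- The unit sphere in `ℂ^m` (the sphere `S^{2m-1}`). -/
abbrev Sph (m : ℕ) : Type := {z : Fin m → ℂ // ∑ i, ‖z i‖ ^ 2 = 1}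

/-- The relation on the sphere whose quotient is the weighted projective space `P(χ)`:
`z ∼ w` iff `w = t ·_χ z` for some unimodular `t`. -/
def wRel (m : ℕ) (χ : Fin m → ℕ) (z w : Sph m) : Prop :=
  ∃ t : ℂ, ‖t‖ = 1 ∧ ∀ i, (w : Fin m → ℂ) i = t ^ χ i * (z : Fin m → ℂ) i

/-- The weighted projective space `P(χ)`, with the quotient topology. -/
abbrev WP (m : ℕ) (χ : Fin m → ℕ) : Type := Quot (wRel m χ)

/-- The class `[z]_χ` of a point of the sphere in `P(χ)`. -/
def wpMk (m : ℕ) (χ : Fin m → ℕ) (z : Sph m) : WP m χ := Quot.mk _ z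

/-- `s(χ,ω)`: the least positive integer `s` with `ω i ∣ s * χ i` for all `i`. -/
def sVal (m : ℕ) (χ ω : Fin m → ℕ) : ℕ := sInf {s : ℕ | 0 < s ∧ ∀ i, ω i ∣ s * χ i}

/-- The exponents `d i = s(χ,ω)·χ i/ω i` of the map `e(χ/ω)`. -/
def dExp (m : ℕ) (χ ω : Fin m → ℕ) (i : Fin m) : ℕ := sVal m χ ω * χ i / ω i

/-- `IsNorm m χ v w` says that `w` is the normalisation `N_χ(v)`, i.e. `w` lies on the
sphere and has the form `(λ^{χ_0} v_0, …)` for some real `λ > 0`. -/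
def IsNorm (m : ℕ) (χ : Fin m → ℕ) (v : Fin m → ℂ) (w : Sph m) : Prop :=
  ∃ l : ℝ, 0 < l ∧ ∀ i, (w : Fin m → ℂ) i = (l : ℂ) ^ χ i * v i

/-- Coordinatewise powers of a point of the sphere. -/
def powVec (m : ℕ) (d : Fin m → ℕ) (z : Sph m) : Fin m → ℂ :=
  fun i => (z : Fin m → ℂ) i ^ d i

/-- `IsEMap m χ ω e` says that `e` is the canonical map `e(χ/ω) : P(ω) → P(χ)`:
it is continuous and sends `[z]_ω` to `[N_χ(z_0^{d_0}, …, z_n^{d_n})]_χ`. -/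
def IsEMap (m : ℕ) (χ ω : Fin m → ℕ) (e : WP m ω → WP m χ) : Prop :=
  Continuous e ∧ ∀ z w : Sph m,
    IsNorm m χ (powVec m (dExp m χ ω) z) w → e (wpMk m ω z) = wpMk m χ w

namespace S8

variable {m : ℕ}

lemma sph_exists_ne (z : Sph m) : ∃ i, (z : Fin m → ℂ) i ≠ 0 := by
  by_contra h
  push_neg at h
  have := z.2
  rw [Finset.sum_eq_zero (fun i _ => by rw [h i]; simp)] at this
  exact zero_ne_one this

lemma wrel_equiv (χ : Fin m → ℕ) : Equivalence (wRel m χ) := by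
  constructor
  · intro z; exact ⟨1, by simp, fun i => by simp⟩
  · rintro z w ⟨t, ht, h⟩
    have htne : t ≠ 0 := by intro h0; rw [h0] at ht; simp at ht
    refine ⟨t⁻¹, by rw [norm_inv, ht]; norm_num, fun i => ?_⟩
    rw [h i, ← mul_assoc, ← mul_pow, inv_mul_cancel₀ htne, one_pow, one_mul]
  · rintro z w u ⟨t, ht, h⟩ ⟨s, hs, h'⟩
    refine ⟨s * t, by rw [norm_mul, ht, hs]; ring, fun i => ?_⟩
    rw [h' i, h i, mul_pow]; ring

lemma mk_eq_iff (χ : Fin m → ℕ) (z w : Sph m) :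
    wpMk m χ z = wpMk m χ w ↔ wRel m χ z w := by
  rw [wpMk, wpMk, Quot.eq, Equivalence.eqvGen_iff (wrel_equiv χ)]

lemma normExists (χ : Fin m → ℕ) (hχ : ∀ i, 1 ≤ χ i) (v : Fin m → ℂ)
    (hv : ∃ i, v i ≠ 0) : ∃ w : Sph m, IsNorm m χ v w := by
  obtain ⟨i₀, hi₀⟩ := hv
  set g : ℝ → ℝ := fun l => ∑ i, ‖(l : ℂ) ^ χ i * v i‖ ^ 2 with hg
  have hgc : Continuous g := by
    apply continuous_finset_sum
    intro i _
    exact ((continuous_norm.comp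
      ((Complex.continuous_ofReal.pow _).mul continuous_const)).pow 2)
  have hg0 : g 0 = 0 := by
    apply Finset.sum_eq_zero
    intro i _
    have hne : χ i ≠ 0 := Nat.one_le_iff_ne_zero.mp (hχ i)
    simp [Complex.ofReal_zero, zero_pow hne]
  set M : ℝ := max 1 (‖v i₀‖)⁻¹ with hM
  have hM1 : (1 : ℝ) ≤ M := le_max_left _ _
  have hM0 : (0 : ℝ) ≤ M := by linarith
  have habs : 0 < ‖v i₀‖ := by
    simpa [norm_pos_iff] using hi₀
  have hgM : 1 ≤ g M := by
    have h1 : 1 ≤ ‖(M : ℂ) ^ χ i₀ * v i₀‖ ^ 2 := by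
      rw [norm_mul, norm_pow, Complex.norm_real, Real.norm_eq_abs, abs_of_nonneg hM0]
      have h2 : M ≤ M ^ χ i₀ := le_self_pow₀ hM1 (Nat.one_le_iff_ne_zero.mp (hχ i₀))
      have h3 : (‖v i₀‖)⁻¹ ≤ M ^ χ i₀ := le_trans (le_max_right _ _) h2
      have h4 : 1 ≤ M ^ χ i₀ * ‖v i₀‖ := by
        rw [← inv_mul_cancel₀ (ne_of_gt habs)]
        exact mul_le_mul_of_nonneg_right h3 (le_of_lt habs)
      nlinarith
    calc (1:ℝ) ≤ ‖(M : ℂ) ^ χ i₀ * v i₀‖ ^ 2 := h1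
    _ ≤ g M := Finset.single_le_sum (f := fun i => ‖(M : ℂ) ^ χ i * v i‖ ^ 2)
        (fun i _ => sq_nonneg _) (Finset.mem_univ i₀)
  have := intermediate_value_Icc hM0 hgc.continuousOn
  have h1mem : (1:ℝ) ∈ Set.Icc (g 0) (g M) := by rw [hg0]; exact ⟨zero_le_one, hgM⟩
  obtain ⟨l, hl, hgl⟩ := this h1mem
  have hlpos : 0 < l := by
    rcases lt_or_eq_of_le hl.1 with h | h
    · exact h
    · exfalso; rw [← h] at hgl; rw [hg0] at hgl; exact one_ne_zero hgl.symm
  exact ⟨⟨fun i => (l : ℂ) ^ χ i * v i, hgl⟩, l, hlpos, fun i => rfl⟩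

/-- Key scaling lemma: if `v_i^{e_i} = c^{χ_i} w_i^{e_i}` for sphere points `v, w`,
then `|c| = 1`. -/
lemma abs_coef_eq_one (χ e : Fin m → ℕ) (hχ : ∀ i, 1 ≤ χ i) (he : ∀ i, 1 ≤ e i)
    (w v : Sph m) (c : ℂ)
    (h : ∀ i, (v : Fin m → ℂ) i ^ e i = c ^ χ i * (w : Fin m → ℂ) i ^ e i) :
    ‖c‖ = 1 := by
  set a := ‖c‖ with ha
  have ha0 : 0 ≤ a := norm_nonneg c
  have habs : ∀ i, ‖(v : Fin m → ℂ) i‖ ^ e i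
      = a ^ χ i * ‖(w : Fin m → ℂ) i‖ ^ e i := by
    intro i
    have := congrArg norm (h i)
    rwa [norm_mul, norm_pow, norm_pow, norm_pow] at this
  rcases lt_trichotomy a 1 with hlt | heq | hgt
  · exfalso
    have hle : ∀ i, ‖(v : Fin m → ℂ) i‖ ≤ ‖(w : Fin m → ℂ) i‖ := by
      intro i
      have h1 : a ^ χ i ≤ 1 := pow_le_one₀ ha0 (le_of_lt hlt)
      have h2 : ‖(v : Fin m → ℂ) i‖ ^ e i
          ≤ ‖(w : Fin m → ℂ) i‖ ^ e i := by
        rw [habs i]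
        nlinarith [pow_nonneg (norm_nonneg ((w : Fin m → ℂ) i)) (e i)]
      exact (pow_le_pow_iff_left₀ (norm_nonneg _) (norm_nonneg _)
        (by have := he i; omega)).mp h2
    obtain ⟨i₀, hi₀⟩ := sph_exists_ne w
    have hstrict : ‖(v : Fin m → ℂ) i₀‖ < ‖(w : Fin m → ℂ) i₀‖ := by
      have hwpos : 0 < ‖(w : Fin m → ℂ) i₀‖ := by
        simpa [norm_pos_iff] using hi₀
      have h1 : a ^ χ i₀ < 1 := pow_lt_one₀ ha0 hlt (by have := hχ i₀; omega)
      have h2 : ‖(v : Fin m → ℂ) i₀‖ ^ e i₀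
          < ‖(w : Fin m → ℂ) i₀‖ ^ e i₀ := by
        rw [habs i₀]
        nlinarith [pow_pos hwpos (e i₀)]
      exact (pow_lt_pow_iff_left₀ (norm_nonneg _) (norm_nonneg _)
        (by have := he i₀; omega)).mp h2
    have hsum : ∑ i, ‖(v : Fin m → ℂ) i‖ ^ 2
        < ∑ i, ‖(w : Fin m → ℂ) i‖ ^ 2 := by
      apply Finset.sum_lt_sum
      · intro i _
        exact pow_le_pow_left₀ (norm_nonneg _) (hle i) 2
      · exact ⟨i₀, Finset.mem_univ i₀,
          pow_lt_pow_left₀ hstrict (norm_nonneg _) (by norm_num)⟩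
    rw [v.2, w.2] at hsum
    exact lt_irrefl 1 hsum
  · exact heq
  · exfalso
    have hle : ∀ i, ‖(w : Fin m → ℂ) i‖ ≤ ‖(v : Fin m → ℂ) i‖ := by
      intro i
      have h1 : 1 ≤ a ^ χ i := one_le_pow₀ (le_of_lt hgt)
      have h2 : ‖(w : Fin m → ℂ) i‖ ^ e i
          ≤ ‖(v : Fin m → ℂ) i‖ ^ e i := by
        rw [habs i]
        nlinarith [pow_nonneg (norm_nonneg ((w : Fin m → ℂ) i)) (e i)]
      exact (pow_le_pow_iff_left₀ (norm_nonneg _) (norm_nonneg _)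
        (by have := he i; omega)).mp h2
    obtain ⟨i₀, hi₀⟩ := sph_exists_ne w
    have hstrict : ‖(w : Fin m → ℂ) i₀‖ < ‖(v : Fin m → ℂ) i₀‖ := by
      have hwpos : 0 < ‖(w : Fin m → ℂ) i₀‖ := by
        simpa [norm_pos_iff] using hi₀
      have h1 : 1 < a ^ χ i₀ := one_lt_pow₀ hgt (by have := hχ i₀; omega)
      have h2 : ‖(w : Fin m → ℂ) i₀‖ ^ e i₀
          < ‖(v : Fin m → ℂ) i₀‖ ^ e i₀ := by
        rw [habs i₀]
        nlinarith [pow_pos hwpos (e i₀)]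
      exact (pow_lt_pow_iff_left₀ (norm_nonneg _) (norm_nonneg _)
        (by have := he i₀; omega)).mp h2
    have hsum : ∑ i, ‖(w : Fin m → ℂ) i‖ ^ 2
        < ∑ i, ‖(v : Fin m → ℂ) i‖ ^ 2 := by
      apply Finset.sum_lt_sum
      · intro i _
        exact pow_le_pow_left₀ (norm_nonneg _) (hle i) 2
      · exact ⟨i₀, Finset.mem_univ i₀,
          pow_lt_pow_left₀ hstrict (norm_nonneg _) (by norm_num)⟩
    rw [v.2, w.2] at hsum
    exact lt_irrefl 1 hsum



/-- The unit circle as a subtype. -/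
abbrev Circ : Type := {t : ℂ // ‖t‖ = 1}

lemma isCompact_sph_set (m : ℕ) :
    IsCompact {z : Fin m → ℂ | ∑ i, ‖z i‖ ^ 2 = 1} := by
  have hcont : Continuous (fun z : Fin m → ℂ => ∑ i, ‖z i‖ ^ 2) := by
    apply continuous_finset_sum
    intro i _
    exact (continuous_norm.comp (continuous_apply i)).pow 2
  have hclosed : IsClosed {z : Fin m → ℂ | ∑ i, ‖z i‖ ^ 2 = 1} :=
    isClosed_eq hcont continuous_const
  have hsub : {z : Fin m → ℂ | ∑ i, ‖z i‖ ^ 2 = 1} ⊆ Metric.closedBall 0 1 := by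
    intro z hz
    rw [Metric.mem_closedBall, dist_zero_right]
    rw [pi_norm_le_iff_of_nonneg zero_le_one]
    intro i
    have h1 : ‖z i‖ ^ 2 ≤ 1 := by
      rw [← hz]
      exact Finset.single_le_sum (f := fun j => ‖z j‖ ^ 2)
        (fun j _ => sq_nonneg _) (Finset.mem_univ i)
    have : ‖z i‖ ≤ 1 := by nlinarith [norm_nonneg (z i)]
    simpa using this
  exact (isCompact_closedBall 0 1).of_isClosed_subset hclosed hsub

instance sph_compact (m : ℕ) : CompactSpace (Sph m) :=
  isCompact_iff_compactSpace.mp (isCompact_sph_set m)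

instance circ_compact : CompactSpace Circ := by
  have h : IsCompact {t : ℂ | ‖t‖ = 1} := by
    have he : {t : ℂ | ‖t‖ = 1} = Metric.sphere 0 1 := by
      ext t
      simp
    rw [he]
    exact isCompact_sphere 0 1
  exact isCompact_iff_compactSpace.mp h

variable {m : ℕ}

/-- The weighted circle action on the sphere. -/
def actS (χ : Fin m → ℕ) (t : Circ) (z : Sph m) : Sph m :=
  ⟨fun i => (t : ℂ) ^ χ i * (z : Fin m → ℂ) i, by
    have : ∀ i, ‖(t : ℂ) ^ χ i * (z : Fin m → ℂ) i‖ ^ 2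
        = ‖(z : Fin m → ℂ) i‖ ^ 2 := by
      intro i
      rw [norm_mul, norm_pow, t.2, one_pow, one_mul]
    rw [Finset.sum_congr rfl (fun i _ => this i)]
    exact z.2⟩

lemma actS_continuous (χ : Fin m → ℕ) :
    Continuous (fun p : Circ × Sph m => actS χ p.1 p.2) := by
  apply Continuous.subtype_mk
  apply continuous_pi
  intro i
  exact ((continuous_subtype_val.comp continuous_fst).pow _).mul
    ((continuous_apply i).comp (continuous_subtype_val.comp continuous_snd))

lemma circ_ne_zero (t : Circ) : (t : ℂ) ≠ 0 := by
  intro h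
  have := t.2
  rw [h] at this
  simp at this

def circInv (t : Circ) : Circ :=
  ⟨(t : ℂ)⁻¹, by rw [norm_inv, t.2]; norm_num⟩

lemma actS_inv (χ : Fin m → ℕ) (t : Circ) (z : Sph m) :
    actS χ (circInv t) (actS χ t z) = z := by
  apply Subtype.ext
  funext i
  show ((t : ℂ)⁻¹) ^ χ i * ((t : ℂ) ^ χ i * (z : Fin m → ℂ) i) = (z : Fin m → ℂ) i
  rw [← mul_assoc, inv_pow, inv_mul_cancel₀ (pow_ne_zero _ (circ_ne_zero t)), one_mul]

lemma actS_inv' (χ : Fin m → ℕ) (t : Circ) (z : Sph m) :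
    actS χ t (actS χ (circInv t) z) = z := by
  apply Subtype.ext
  funext i
  show (t : ℂ) ^ χ i * (((t : ℂ)⁻¹) ^ χ i * (z : Fin m → ℂ) i) = (z : Fin m → ℂ) i
  rw [← mul_assoc, inv_pow, mul_inv_cancel₀ (pow_ne_zero _ (circ_ne_zero t)), one_mul]

lemma wrel_iff_act (χ : Fin m → ℕ) (z w : Sph m) :
    wRel m χ z w ↔ ∃ t : Circ, w = actS χ t z := by
  constructor
  · rintro ⟨t, ht, h⟩
    exact ⟨⟨t, ht⟩, Subtype.ext (funext fun i => h i)⟩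
  · rintro ⟨t, rfl⟩
    exact ⟨t, t.2, fun i => rfl⟩

lemma actS_continuous_fixed (χ : Fin m → ℕ) (t : Circ) :
    Continuous (fun z : Sph m => actS χ t z) :=
  (actS_continuous χ).comp (Continuous.prodMk continuous_const continuous_id)

lemma isOpenMap_wpMk (χ : Fin m → ℕ) : IsOpenMap (wpMk m χ) := by
  intro U hU
  have hq := isQuotientMap_quot_mk (r := wRel m χ)
  rw [← hq.isOpen_preimage]
  have hst : Quot.mk (wRel m χ) ⁻¹' (wpMk m χ '' U) = ⋃ t : Circ, actS χ t '' U := by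
    ext z
    simp only [Set.mem_preimage, Set.mem_image, Set.mem_iUnion]
    constructor
    · rintro ⟨u, hu, hz⟩
      have h2 : wRel m χ u z := (mk_eq_iff χ u z).mp hz
      rw [wrel_iff_act] at h2
      obtain ⟨t, rfl⟩ := h2
      exact ⟨t, u, hu, rfl⟩
    · rintro ⟨t, u, hu, rfl⟩
      exact ⟨u, hu, (mk_eq_iff χ u _).mpr ((wrel_iff_act χ u _).mpr ⟨t, rfl⟩)⟩
  rw [hst]
  apply isOpen_iUnion
  intro t
  have himg : actS χ t '' U = (actS χ (circInv t)) ⁻¹' U := by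
    ext z
    constructor
    · rintro ⟨u, hu, rfl⟩
      rw [Set.mem_preimage, actS_inv]
      exact hu
    · intro hz
      exact ⟨actS χ (circInv t) z, hz, actS_inv' χ t z⟩
  rw [himg]
  exact hU.preimage (actS_continuous_fixed χ (circInv t))

lemma isClosed_rel (χ : Fin m → ℕ) :
    IsClosed {p : Sph m × Sph m | wRel m χ p.1 p.2} := by
  have hR : {p : Sph m × Sph m | wRel m χ p.1 p.2}
      = Set.range (fun q : Circ × Sph m => (q.2, actS χ q.1 q.2)) := by
    ext ⟨z, w⟩
    simp only [Set.mem_setOf_eq, Set.mem_range, Prod.mk.injEq, Prod.exists]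
    rw [wrel_iff_act]
    constructor
    · rintro ⟨t, rfl⟩
      exact ⟨t, z, rfl, rfl⟩
    · rintro ⟨t, z₀, rfl, rfl⟩
      exact ⟨t, rfl⟩
  rw [hR]
  have hc : Continuous (fun q : Circ × Sph m => (q.2, actS χ q.1 q.2)) :=
    Continuous.prodMk continuous_snd (actS_continuous χ)
  exact (isCompact_range hc).isClosed

lemma wp_t2 (χ : Fin m → ℕ) : T2Space (WP m χ) := by
  rw [t2_iff_isClosed_diagonal]
  have hopen : IsOpenMap (Prod.map (wpMk m χ) (wpMk m χ)) :=
    (isOpenMap_wpMk χ).prodMap (isOpenMap_wpMk χ)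
  have hcont : Continuous (Prod.map (wpMk m χ) (wpMk m χ)) :=
    Continuous.prodMap continuous_quot_mk continuous_quot_mk
  have hsurj : Function.Surjective (Prod.map (wpMk m χ) (wpMk m χ)) :=
    Function.Surjective.prodMap Quot.exists_rep Quot.exists_rep
  have hqm := hopen.isQuotientMap hcont hsurj
  rw [← hqm.isClosed_preimage]
  have hpre : Prod.map (wpMk m χ) (wpMk m χ) ⁻¹' Set.diagonal (WP m χ)
      = {p : Sph m × Sph m | wRel m χ p.1 p.2} := by
    ext ⟨z, w⟩
    simp only [Set.mem_preimage, Set.mem_setOf_eq, Prod.map_apply, Set.mem_diagonal_iff]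
    exact mk_eq_iff χ z w
  rw [hpre]
  exact isClosed_rel χ


lemma sval_clean (m : ℕ) (c : Fin m → ℕ) (hc : ∀ i, 1 ≤ c i) :
    0 < sInf {s : ℕ | 0 < s ∧ ∀ i, c i ∣ s} ∧
    (∀ i, c i ∣ sInf {s : ℕ | 0 < s ∧ ∀ i, c i ∣ s}) ∧
    sInf {s : ℕ | 0 < s ∧ ∀ i, c i ∣ s} ∣ ∏ i, c i := by
  have hprodpos : 0 < ∏ i, c i := Finset.prod_pos (fun i _ => hc i)
  have hne : ({s : ℕ | 0 < s ∧ ∀ i, c i ∣ s}).Nonempty :=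
    ⟨∏ i, c i, hprodpos, fun i => Finset.dvd_prod_of_mem c (Finset.mem_univ i)⟩
  have hmem := Nat.sInf_mem hne
  set S := sInf {s : ℕ | 0 < s ∧ ∀ i, c i ∣ s} with hS
  set L := Finset.univ.lcm c with hL
  have hLdvdP : L ∣ ∏ i, c i :=
    Finset.lcm_dvd (fun i _ => Finset.dvd_prod_of_mem c (Finset.mem_univ i))
  have hLpos : 0 < L := Nat.pos_of_dvd_of_pos hLdvdP hprodpos
  have hLS : L ∣ S := Finset.lcm_dvd (fun i _ => hmem.2 i)
  have hSL : S ≤ L := Nat.sInf_le ⟨hLpos, fun i => Finset.dvd_lcm (Finset.mem_univ i)⟩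
  have hSeL : S = L := le_antisymm hSL (Nat.le_of_dvd hmem.1 hLS)
  exact ⟨hmem.1, hmem.2, hSeL ▸ hLdvdP⟩

lemma zpow_pow (a : ℂ) (p : ℤ) (n : ℕ) : (a ^ p) ^ n = a ^ (p * n) := by
  rw [← zpow_natCast (a ^ p), ← zpow_mul]

lemma pow_zpow (a : ℂ) (n : ℕ) (p : ℤ) : (a ^ n) ^ p = a ^ ((n : ℤ) * p) := by
  rw [← zpow_natCast a n, ← zpow_mul]

lemma pow_zpow_comm (a : ℂ) (n : ℕ) (x : ℤ) : (a ^ n) ^ x = (a ^ x) ^ n := by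
  rw [pow_zpow, zpow_pow, mul_comm]

lemma emap_eval {m : ℕ} {χ ω : Fin m → ℕ} {e : WP m ω → WP m χ} (h : IsEMap m χ ω e)
    (hχ : ∀ i, 1 ≤ χ i) (d : Fin m → ℕ) (hd : ∀ i, dExp m χ ω i = d i) (z : Sph m) :
    ∃ (W : Sph m) (l : ℝ), 0 < l ∧
      (∀ i, (W : Fin m → ℂ) i = (l : ℂ) ^ χ i * (z : Fin m → ℂ) i ^ d i) ∧
      e (wpMk m ω z) = wpMk m χ W := by
  obtain ⟨i₀, hi₀⟩ := sph_exists_ne z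
  obtain ⟨W, l, hl, hW⟩ := normExists χ hχ (powVec m (dExp m χ ω) z)
    ⟨i₀, pow_ne_zero _ hi₀⟩
  refine ⟨W, l, hl, fun i => ?_, h.2 z W ⟨l, hl, hW⟩⟩
  rw [hW i]
  show (l : ℂ) ^ χ i * (z : Fin m → ℂ) i ^ dExp m χ ω i = _
  rw [hd i]


end S8

open S8

/-- For coprime weight vectors `σ, σ'` with coordinatewise product `σσ'`,
the map `w ↦ (e(σ'/σσ')(w), e(σ/σσ')(w))` is a homeomorphism of `P(σσ')` onto the subspace
`{(z', z) ∈ P(σ') × P(σ) : e(1/σ')(z') = e(1/σ)(z)}`; i.e. the square of `e`-maps is a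
pullback square of topological spaces. -/
theorem statement8 (n : ℕ) (hn : 1 ≤ n) (σ σ' : Fin (n + 1) → ℕ)
    (hσ : ∀ i, 1 ≤ σ i) (hσ' : ∀ i, 1 ≤ σ' i)
    (hcop : ∀ i j, Nat.gcd (σ i) (σ' j) = 1)
    (e1 : WP (n + 1) (fun i => σ i * σ' i) → WP (n + 1) σ')
    (h1 : IsEMap (n + 1) σ' (fun i => σ i * σ' i) e1)
    (e2 : WP (n + 1) (fun i => σ i * σ' i) → WP (n + 1) σ)
    (h2 : IsEMap (n + 1) σ (fun i => σ i * σ' i) e2)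
    (q' : WP (n + 1) σ' → WP (n + 1) (fun _ => 1))
    (hq' : IsEMap (n + 1) (fun _ => 1) σ' q')
    (q : WP (n + 1) σ → WP (n + 1) (fun _ => 1))
    (hq : IsEMap (n + 1) (fun _ => 1) σ q) :
    ∃ F : WP (n + 1) (fun i => σ i * σ' i) ≃ₜ
        {p : WP (n + 1) σ' × WP (n + 1) σ // q' p.1 = q p.2},
      ∀ w, ((F w : WP (n + 1) σ' × WP (n + 1) σ)) = (e1 w, e2 w) := by
  have hωpos : ∀ i, 1 ≤ σ i * σ' i := fun i => Nat.one_le_iff_ne_zero.mpr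
    (Nat.mul_ne_zero (Nat.one_le_iff_ne_zero.mp (hσ i)) (Nat.one_le_iff_ne_zero.mp (hσ' i)))
  -- the clean sets
  have hiffA : ∀ (s : ℕ) (i : Fin (n+1)), (σ i * σ' i ∣ s * σ' i ↔ σ i ∣ s) :=
    fun s i => Nat.mul_dvd_mul_iff_right (hσ' i)
  have hiffB : ∀ (s : ℕ) (i : Fin (n+1)), (σ i * σ' i ∣ s * σ i ↔ σ' i ∣ s) := by
    intro s i
    rw [mul_comm (σ i) (σ' i)]
    exact Nat.mul_dvd_mul_iff_right (hσ i)
  have hsetA : {s : ℕ | 0 < s ∧ ∀ i, σ i * σ' i ∣ s * σ' i}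
      = {s : ℕ | 0 < s ∧ ∀ i, σ i ∣ s} := by
    ext s
    simp only [Set.mem_setOf_eq, hiffA]
  have hsetB : {s : ℕ | 0 < s ∧ ∀ i, σ i * σ' i ∣ s * σ i}
      = {s : ℕ | 0 < s ∧ ∀ i, σ' i ∣ s} := by
    ext s
    simp only [Set.mem_setOf_eq, hiffB]
  have hsetD : {s : ℕ | 0 < s ∧ ∀ i, σ i ∣ s * 1} = {s : ℕ | 0 < s ∧ ∀ i, σ i ∣ s} := by
    simp only [mul_one]
  have hsetC : {s : ℕ | 0 < s ∧ ∀ i, σ' i ∣ s * 1} = {s : ℕ | 0 < s ∧ ∀ i, σ' i ∣ s} := by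
    simp only [mul_one]
  set A := sVal (n+1) σ' (fun i => σ i * σ' i) with hAdef
  set B := sVal (n+1) σ (fun i => σ i * σ' i) with hBdef
  have hAval : A = sInf {s : ℕ | 0 < s ∧ ∀ i, σ i ∣ s} := by
    rw [hAdef, sVal, hsetA]
  have hBval : B = sInf {s : ℕ | 0 < s ∧ ∀ i, σ' i ∣ s} := by
    rw [hBdef, sVal, hsetB]
  have hD : sVal (n+1) (fun _ => 1) σ = A := by
    have hrfl : sVal (n+1) (fun _ => 1) σ = sInf {s : ℕ | 0 < s ∧ ∀ i, σ i ∣ s * 1} := rfl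
    rw [hrfl, hsetD, hAval]
  have hC : sVal (n+1) (fun _ => 1) σ' = B := by
    have hrfl : sVal (n+1) (fun _ => 1) σ' = sInf {s : ℕ | 0 < s ∧ ∀ i, σ' i ∣ s * 1} := rfl
    rw [hrfl, hsetC, hBval]
  obtain ⟨hApos, hAdvd, hAprod⟩ := hAval ▸ sval_clean (n+1) σ hσ
  obtain ⟨hBpos, hBdvd, hBprod⟩ := hBval ▸ sval_clean (n+1) σ' hσ'
  -- coprimality and Bezout
  have hcopAB : Nat.Coprime A B := by
    have hPP : Nat.Coprime (∏ i, σ i) (∏ i, σ' i) :=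
      Nat.Coprime.prod_left (fun i _ => Nat.Coprime.prod_right (fun j _ => hcop i j))
    exact Nat.Coprime.coprime_dvd_left hAprod (Nat.Coprime.coprime_dvd_right hBprod hPP)
  set x : ℤ := Nat.gcdA A B with hxdef
  set y : ℤ := Nat.gcdB A B with hydef
  have hxy : (A : ℤ) * x + (B : ℤ) * y = 1 := by
    have h := Nat.gcd_eq_gcd_ab A B
    rw [hcopAB] at h
    exact_mod_cast h.symm
  -- exponents
  set eA : Fin (n+1) → ℕ := fun i => A / σ i with heAdef
  set eB : Fin (n+1) → ℕ := fun i => B / σ' i with heBdef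
  have heA : ∀ i, σ i * eA i = A := fun i => Nat.mul_div_cancel' (hAdvd i)
  have heB : ∀ i, σ' i * eB i = B := fun i => Nat.mul_div_cancel' (hBdvd i)
  have heA1 : ∀ i, 1 ≤ eA i := by
    intro i
    rcases Nat.eq_zero_or_pos (eA i) with h | h
    · exfalso; have := heA i; rw [h, mul_zero] at this; omega
    · exact h
  have heB1 : ∀ i, 1 ≤ eB i := by
    intro i
    rcases Nat.eq_zero_or_pos (eB i) with h | h
    · exfalso; have := heB i; rw [h, mul_zero] at this; omega
    · exact h
  -- dExp computations
  have hdE1 : ∀ i, dExp (n+1) σ' (fun i => σ i * σ' i) i = eA i := by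
    intro i
    rw [dExp, ← hAdef]
    show A * σ' i / (σ i * σ' i) = eA i
    exact Nat.mul_div_mul_right A (σ i) (hσ' i)
  have hdE2 : ∀ i, dExp (n+1) σ (fun i => σ i * σ' i) i = eB i := by
    intro i
    rw [dExp, ← hBdef]
    show B * σ i / (σ i * σ' i) = eB i
    rw [mul_comm (σ i) (σ' i)]
    exact Nat.mul_div_mul_right B (σ' i) (hσ i)
  have hdEq' : ∀ i, dExp (n+1) (fun _ => 1) σ' i = eB i := by
    intro i
    rw [dExp, hC, mul_one]
  have hdEq : ∀ i, dExp (n+1) (fun _ => 1) σ i = eA i := by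
    intro i
    rw [dExp, hD, mul_one]
  have h1' : ∀ i : Fin (n+1), 1 ≤ (fun _ : Fin (n+1) => 1) i := fun _ => le_refl 1
  -- commutativity on sphere points
  have hcommS : ∀ w : Sph (n+1), q' (e1 (wpMk (n+1) (fun i => σ i * σ' i) w)) = q (e2 (wpMk (n+1) (fun i => σ i * σ' i) w)) := by
    intro w
    obtain ⟨W1, l1, hl1, hW1, hE1⟩ := emap_eval h1 hσ' eA hdE1 w
    obtain ⟨U, n1, hn1, hU, hQ'⟩ := emap_eval hq' h1' eB hdEq' W1
    obtain ⟨W2, l2, hl2, hW2, hE2⟩ := emap_eval h2 hσ eB hdE2 w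
    obtain ⟨V, n2, hn2, hV, hQ⟩ := emap_eval hq h1' eA hdEq W2
    rw [hE1, hQ', hE2, hQ]
    -- show U = V
    have hUi : ∀ i, (U : Fin (n+1) → ℂ) i = (n1 : ℂ) * (l1 : ℂ) ^ B *
        (w : Fin (n+1) → ℂ) i ^ (eA i * eB i) := by
      intro i
      rw [hU i, hW1 i, pow_one, mul_pow, ← pow_mul, ← pow_mul, heB i, mul_assoc]
    have hVi : ∀ i, (V : Fin (n+1) → ℂ) i = (n2 : ℂ) * (l2 : ℂ) ^ A *
        (w : Fin (n+1) → ℂ) i ^ (eA i * eB i) := by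
      intro i
      rw [hV i, hW2 i, pow_one, mul_pow, ← pow_mul, ← pow_mul, heA i, mul_assoc,
        mul_comm (eB i) (eA i)]
    have hd2 : (n2 : ℂ) * (l2 : ℂ) ^ A ≠ 0 := by
      push_cast
      exact mul_ne_zero (by exact_mod_cast ne_of_gt hn2)
        (pow_ne_zero _ (by exact_mod_cast ne_of_gt hl2))
    set c : ℂ := ((n1 * l1 ^ B / (n2 * l2 ^ A) : ℝ) : ℂ) with hcdef
    have hcform : ∀ i, (U : Fin (n+1) → ℂ) i ^ (fun _ : Fin (n+1) => 1) i
        = c ^ (fun _ : Fin (n+1) => 1) i * (V : Fin (n+1) → ℂ) i ^ (fun _ : Fin (n+1) => 1) i := by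
      intro i
      simp only [pow_one]
      rw [hUi i, hVi i, hcdef]
      push_cast
      have hn2c : (n2 : ℂ) ≠ 0 := by exact_mod_cast ne_of_gt hn2
      have hl2c : (l2 : ℂ) ≠ 0 := by exact_mod_cast ne_of_gt hl2
      field_simp
    have habs := abs_coef_eq_one (fun _ => 1) (fun _ => 1) h1' h1' V U c hcform
    have hcpos : (0 : ℝ) < (n1 * l1 ^ B) / (n2 * l2 ^ A) := by positivity
    have hc1 : c = 1 := by
      rw [hcdef]
      rw [hcdef, Complex.norm_real, Real.norm_eq_abs, abs_of_pos hcpos] at habs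
      rw [habs]
      norm_num
    have hUV : U = V := by
      apply Subtype.ext
      funext i
      have := hcform i
      simp only [pow_one, hc1, one_mul] at this
      exact this
    rw [hUV]
  -- injectivity on sphere points
  have hinj : ∀ w v : Sph (n+1),
      e1 (wpMk (n+1) (fun i => σ i * σ' i) w) = e1 (wpMk (n+1) (fun i => σ i * σ' i) v) →
      e2 (wpMk (n+1) (fun i => σ i * σ' i) w) = e2 (wpMk (n+1) (fun i => σ i * σ' i) v) →
      wpMk (n+1) (fun i => σ i * σ' i) w = wpMk (n+1) (fun i => σ i * σ' i) v := by
    intro w v hE1eq hE2eq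
    obtain ⟨W1, l1, hl1, hW1, hE1⟩ := emap_eval h1 hσ' eA hdE1 w
    obtain ⟨V1, k1, hk1, hV1, hF1⟩ := emap_eval h1 hσ' eA hdE1 v
    obtain ⟨W2, l2, hl2, hW2, hE2⟩ := emap_eval h2 hσ eB hdE2 w
    obtain ⟨V2, k2, hk2, hV2, hF2⟩ := emap_eval h2 hσ eB hdE2 v
    have hmk1 : wpMk (n+1) σ' W1 = wpMk (n+1) σ' V1 := by rw [← hE1, ← hF1, hE1eq]
    have hmk2 : wpMk (n+1) σ W2 = wpMk (n+1) σ V2 := by rw [← hE2, ← hF2, hE2eq]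
    obtain ⟨t, ht, hrel1⟩ := (mk_eq_iff σ' W1 V1).mp hmk1
    obtain ⟨s, hs, hrel2⟩ := (mk_eq_iff σ W2 V2).mp hmk2
    have hk1ne : ((k1 : ℝ) : ℂ) ≠ 0 := by exact_mod_cast ne_of_gt hk1
    have hk2ne : ((k2 : ℝ) : ℂ) ≠ 0 := by exact_mod_cast ne_of_gt hk2
    set c : ℂ := t * ((l1 / k1 : ℝ) : ℂ) with hcdef
    set c₂ : ℂ := s * ((l2 / k2 : ℝ) : ℂ) with hc2def
    have hkc : ((k1 : ℝ) : ℂ) * c = t * ((l1 : ℝ) : ℂ) := by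
      rw [hcdef]
      push_cast
      field_simp
    have hkc2 : ((k2 : ℝ) : ℂ) * c₂ = s * ((l2 : ℝ) : ℂ) := by
      rw [hc2def]
      push_cast
      field_simp
    have hform1 : ∀ i, (v : Fin (n+1) → ℂ) i ^ eA i
        = c ^ σ' i * (w : Fin (n+1) → ℂ) i ^ eA i := by
      intro i
      have h := hrel1 i
      rw [hV1 i, hW1 i] at h
      apply mul_left_cancel₀ (pow_ne_zero (σ' i) hk1ne)
      rw [h, ← mul_assoc, ← mul_assoc, ← mul_pow, ← mul_pow, hkc]
    have hform2 : ∀ i, (v : Fin (n+1) → ℂ) i ^ eB i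
        = c₂ ^ σ i * (w : Fin (n+1) → ℂ) i ^ eB i := by
      intro i
      have h := hrel2 i
      rw [hV2 i, hW2 i] at h
      apply mul_left_cancel₀ (pow_ne_zero (σ i) hk2ne)
      rw [h, ← mul_assoc, ← mul_assoc, ← mul_pow, ← mul_pow, hkc2]
    have habs1 : ‖c‖ = 1 := abs_coef_eq_one σ' eA hσ' heA1 w v c hform1
    have habs2 : ‖c₂‖ = 1 := abs_coef_eq_one σ eB hσ heB1 w v c₂ hform2
    have hcne : c ≠ 0 := by
      intro h0
      rw [h0] at habs1
      simp at habs1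
    have hc2ne : c₂ ≠ 0 := by
      intro h0
      rw [h0] at habs2
      simp at habs2
    have habsvw : ∀ i, ‖(v : Fin (n+1) → ℂ) i‖
        = ‖(w : Fin (n+1) → ℂ) i‖ := by
      intro i
      have h := congrArg norm (hform1 i)
      rw [norm_mul, norm_pow, norm_pow, norm_pow, habs1, one_pow, one_mul] at h
      have heAne : eA i ≠ 0 := by have := heA1 i; omega
      exact le_antisymm
        ((pow_le_pow_iff_left₀ (norm_nonneg _) (norm_nonneg _) heAne).mp
          (le_of_eq h))
        ((pow_le_pow_iff_left₀ (norm_nonneg _) (norm_nonneg _) heAne).mp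
          (le_of_eq h.symm))
    set u : ℂ := c ^ x * c₂ ^ y with hudef
    have habsu : ‖u‖ = 1 := by
      rw [hudef, norm_mul, norm_zpow, norm_zpow, habs1, habs2, one_zpow, one_zpow, one_mul]
    have hwrel : ∀ i, (v : Fin (n+1) → ℂ) i
        = u ^ (σ i * σ' i) * (w : Fin (n+1) → ℂ) i := by
      intro i
      by_cases hwz : (w : Fin (n+1) → ℂ) i = 0
      · have hva : ‖(v : Fin (n+1) → ℂ) i‖ = 0 := by
          rw [habsvw i, hwz, norm_zero]
        rw [hwz, mul_zero]
        exact norm_eq_zero.mp hva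
      · have hvz : (v : Fin (n+1) → ℂ) i ≠ 0 := by
          intro h0
          apply hwz
          have := habsvw i
          rw [h0, norm_zero] at this
          exact norm_eq_zero.mp this.symm
        set r : ℂ := (v : Fin (n+1) → ℂ) i / (w : Fin (n+1) → ℂ) i with hrdef
        have hrne : r ≠ 0 := div_ne_zero hvz hwz
        have hA' : eA i * σ i = A := by rw [mul_comm]; exact heA i
        have hB' : eB i * σ' i = B := by rw [mul_comm]; exact heB i
        have epA : ∀ a : ℂ, a ^ A = (a ^ eA i) ^ σ i := by
          intro a
          rw [← pow_mul, hA']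
        have epB : ∀ a : ℂ, a ^ B = (a ^ eB i) ^ σ' i := by
          intro a
          rw [← pow_mul, hB']
        have hvA : (v : Fin (n+1) → ℂ) i ^ A
            = c ^ (σ i * σ' i) * (w : Fin (n+1) → ℂ) i ^ A := by
          rw [epA, epA, hform1 i, mul_pow, ← pow_mul, mul_comm (σ' i) (σ i)]
        have hvB : (v : Fin (n+1) → ℂ) i ^ B
            = c₂ ^ (σ i * σ' i) * (w : Fin (n+1) → ℂ) i ^ B := by
          rw [epB, epB, hform2 i, mul_pow, ← pow_mul]
        have hrA : r ^ A = c ^ (σ i * σ' i) := by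
          rw [hrdef, div_pow, hvA, mul_div_assoc,
            div_self (pow_ne_zero _ hwz), mul_one]
        have hrB : r ^ B = c₂ ^ (σ i * σ' i) := by
          rw [hrdef, div_pow, hvB, mul_div_assoc,
            div_self (pow_ne_zero _ hwz), mul_one]
        have hr1 : r = (r ^ A) ^ x * (r ^ B) ^ y := by
          rw [pow_zpow, pow_zpow, ← zpow_add₀ hrne, hxy, zpow_one]
        rw [hrA, hrB, pow_zpow_comm, pow_zpow_comm, ← mul_pow] at hr1
        have : u ^ (σ i * σ' i) = r := by rw [hudef, ← hr1]
        rw [this, hrdef, div_mul_cancel₀ _ hwz]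
    exact (mk_eq_iff (fun i => σ i * σ' i) w v).mpr ⟨u, habsu, hwrel⟩

  -- surjectivity on sphere points
  have hB'A : ∀ i, eB i * σ' i = B := fun i => by rw [mul_comm]; exact heB i
  have hA'A : ∀ i, eA i * σ i = A := fun i => by rw [mul_comm]; exact heA i
  have heAne : ∀ i, eA i ≠ 0 := fun i => by have := heA1 i; omega
  have heBne : ∀ i, eB i ≠ 0 := fun i => by have := heB1 i; omega
  have hsurjS : ∀ z' z : Sph (n+1), q' (wpMk (n+1) σ' z') = q (wpMk (n+1) σ z) →
      ∃ W : Sph (n+1), e1 (wpMk (n+1) (fun i => σ i * σ' i) W) = wpMk (n+1) σ' z' ∧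
        e2 (wpMk (n+1) (fun i => σ i * σ' i) W) = wpMk (n+1) σ z := by
    intro z' z hpq
    obtain ⟨Z', n1, hn1, hZ', hQ'⟩ := emap_eval hq' h1' eB hdEq' z'
    obtain ⟨Z, n2, hn2, hZ, hQ⟩ := emap_eval hq h1' eA hdEq z
    have hmk : wpMk (n+1) (fun _ => 1) Z' = wpMk (n+1) (fun _ => 1) Z := by
      rw [← hQ', ← hQ, hpq]
    obtain ⟨t, ht, hrel⟩ := (mk_eq_iff (fun _ => 1) Z' Z).mp hmk
    have hn1ne : ((n1 : ℝ) : ℂ) ≠ 0 := by exact_mod_cast ne_of_gt hn1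
    have hn2ne : ((n2 : ℝ) : ℂ) ≠ 0 := by exact_mod_cast ne_of_gt hn2
    have htne : t ≠ 0 := by
      intro h0
      rw [h0] at ht
      simp at ht
    set c : ℂ := t * ((n1 / n2 : ℝ) : ℂ) with hcdef
    have hcne : c ≠ 0 := by
      rw [hcdef]
      push_cast
      exact mul_ne_zero htne (div_ne_zero hn1ne hn2ne)
    have hnc : ((n2 : ℝ) : ℂ) * c = t * ((n1 : ℝ) : ℂ) := by
      rw [hcdef]
      push_cast
      field_simp
    have hc : ∀ i, (z : Fin (n+1) → ℂ) i ^ eA i = c * (z' : Fin (n+1) → ℂ) i ^ eB i := by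
      intro i
      have h := hrel i
      rw [hZ' i, hZ i, pow_one, pow_one, pow_one] at h
      apply mul_left_cancel₀ hn2ne
      rw [h, ← mul_assoc, ← mul_assoc, hnc]
    have hc' : ∀ i, (z' : Fin (n+1) → ℂ) i ^ eB i
        = c⁻¹ * (z : Fin (n+1) → ℂ) i ^ eA i := by
      intro i
      rw [hc i]
      field_simp
    have hzz' : ∀ i, ((z : Fin (n+1) → ℂ) i = 0 ↔ (z' : Fin (n+1) → ℂ) i = 0) := by
      intro i
      constructor
      · intro h0
        have h := hc i
        rw [h0, zero_pow (heAne i)] at h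
        have h2 := (mul_eq_zero.mp h.symm).resolve_left hcne
        exact (pow_eq_zero_iff (heBne i)).mp h2
      · intro h0
        have h := hc i
        rw [h0, zero_pow (heBne i), mul_zero] at h
        exact (pow_eq_zero_iff (heAne i)).mp h
    set vt : Fin (n+1) → ℂ := fun i => if (z : Fin (n+1) → ℂ) i = 0 then 0 else
      (z' : Fin (n+1) → ℂ) i ^ ((x * (σ i : ℤ))) * (z : Fin (n+1) → ℂ) i ^ ((y * (σ' i : ℤ)))
      with hvtdef
    obtain ⟨i₀, hi₀⟩ := sph_exists_ne z
    have hvtne : ∃ i, vt i ≠ 0 := by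
      refine ⟨i₀, ?_⟩
      rw [hvtdef]
      simp only [if_neg hi₀]
      have hz'i₀ : (z' : Fin (n+1) → ℂ) i₀ ≠ 0 := fun hh => hi₀ ((hzz' i₀).mpr hh)
      exact mul_ne_zero (zpow_ne_zero _ hz'i₀) (zpow_ne_zero _ hi₀)
    obtain ⟨W, κ, hκ, hWdef⟩ := normExists (fun i => σ i * σ' i) hωpos vt hvtne
    have hκne : ((κ : ℝ) : ℂ) ≠ 0 := by exact_mod_cast ne_of_gt hκ
    have claim1 : ∀ i, (W : Fin (n+1) → ℂ) i ^ eA i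
        = (((κ : ℝ) : ℂ) ^ A * c ^ y) ^ σ' i * (z' : Fin (n+1) → ℂ) i := by
      intro i
      by_cases h0 : (z : Fin (n+1) → ℂ) i = 0
      · have hz'0 : (z' : Fin (n+1) → ℂ) i = 0 := (hzz' i).mp h0
        rw [hWdef i, hvtdef]
        simp only [if_pos h0]
        rw [mul_zero, zero_pow (heAne i), hz'0, mul_zero]
      · have hz'ne : (z' : Fin (n+1) → ℂ) i ≠ 0 := fun hh => h0 ((hzz' i).mpr hh)
        rw [hWdef i, hvtdef]
        simp only [if_neg h0]
        have hκp : ((((κ : ℝ) : ℂ)) ^ (σ i * σ' i)) ^ eA i = (((κ : ℝ) : ℂ) ^ A) ^ σ' i := by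
          rw [← pow_mul, ← pow_mul]
          congr 1
          rw [mul_comm (σ i) (σ' i), mul_assoc, heA i, mul_comm]
        have hz'p : ((z' : Fin (n+1) → ℂ) i ^ (x * (σ i : ℤ))) ^ eA i
            = (z' : Fin (n+1) → ℂ) i ^ (x * (A : ℤ)) := by
          rw [zpow_pow]
          congr 1
          have hcast : ((σ i : ℤ)) * ((eA i : ℤ)) = (A : ℤ) := by exact_mod_cast heA i
          rw [mul_assoc, hcast]
        have hzp : ((z : Fin (n+1) → ℂ) i ^ (y * (σ' i : ℤ))) ^ eA i
            = c ^ (y * (σ' i : ℤ)) * (z' : Fin (n+1) → ℂ) i ^ ((eB i : ℤ) * (y * (σ' i : ℤ))) := by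
          rw [zpow_pow, show (y * (σ' i : ℤ)) * (eA i : ℤ) = (eA i : ℤ) * (y * (σ' i : ℤ)) from
            mul_comm _ _, ← pow_zpow, hc i, mul_zpow, pow_zpow]
        have hcp : c ^ (y * (σ' i : ℤ)) = (c ^ y) ^ σ' i := (zpow_pow c y (σ' i)).symm
        have hz'c : (z' : Fin (n+1) → ℂ) i ^ (x * (A : ℤ))
            * (z' : Fin (n+1) → ℂ) i ^ ((eB i : ℤ) * (y * (σ' i : ℤ)))
            = (z' : Fin (n+1) → ℂ) i := by
          rw [← zpow_add₀ hz'ne]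
          have hBe : ((eB i : ℤ)) * ((σ' i : ℤ)) = (B : ℤ) := by exact_mod_cast hB'A i
          have hone : x * (A : ℤ) + (eB i : ℤ) * (y * (σ' i : ℤ)) = 1 := by
            linear_combination hxy + y * hBe
          rw [hone, zpow_one]
        calc (((κ : ℝ) : ℂ) ^ (σ i * σ' i) * ((z' : Fin (n+1) → ℂ) i ^ (x * (σ i : ℤ))
              * (z : Fin (n+1) → ℂ) i ^ (y * (σ' i : ℤ)))) ^ eA i
            = ((((κ : ℝ) : ℂ)) ^ (σ i * σ' i)) ^ eA i
              * (((z' : Fin (n+1) → ℂ) i ^ (x * (σ i : ℤ))) ^ eA i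
                * ((z : Fin (n+1) → ℂ) i ^ (y * (σ' i : ℤ))) ^ eA i) := by
              rw [mul_pow, mul_pow]
          _ = (((κ : ℝ) : ℂ) ^ A) ^ σ' i * ((z' : Fin (n+1) → ℂ) i ^ (x * (A : ℤ))
              * ((c ^ y) ^ σ' i * (z' : Fin (n+1) → ℂ) i ^ ((eB i : ℤ) * (y * (σ' i : ℤ))))) := by
              rw [hκp, hz'p, hzp, hcp]
          _ = ((((κ : ℝ) : ℂ) ^ A) ^ σ' i * (c ^ y) ^ σ' i)
              * ((z' : Fin (n+1) → ℂ) i ^ (x * (A : ℤ))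
                * (z' : Fin (n+1) → ℂ) i ^ ((eB i : ℤ) * (y * (σ' i : ℤ)))) := by
              ring
          _ = (((κ : ℝ) : ℂ) ^ A * c ^ y) ^ σ' i * (z' : Fin (n+1) → ℂ) i := by
              rw [hz'c, mul_pow]
    have claim2 : ∀ i, (W : Fin (n+1) → ℂ) i ^ eB i
        = (((κ : ℝ) : ℂ) ^ B * c⁻¹ ^ x) ^ σ i * (z : Fin (n+1) → ℂ) i := by
      intro i
      by_cases h0 : (z : Fin (n+1) → ℂ) i = 0
      · rw [hWdef i, hvtdef]
        simp only [if_pos h0]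
        rw [mul_zero, zero_pow (heBne i), h0, mul_zero]
      · have hz'ne : (z' : Fin (n+1) → ℂ) i ≠ 0 := fun hh => h0 ((hzz' i).mpr hh)
        rw [hWdef i, hvtdef]
        simp only [if_neg h0]
        have hκp : ((((κ : ℝ) : ℂ)) ^ (σ i * σ' i)) ^ eB i = (((κ : ℝ) : ℂ) ^ B) ^ σ i := by
          rw [← pow_mul, ← pow_mul]
          congr 1
          rw [mul_assoc, heB i, mul_comm]
        have hzp : ((z : Fin (n+1) → ℂ) i ^ (y * (σ' i : ℤ))) ^ eB i
            = (z : Fin (n+1) → ℂ) i ^ (y * (B : ℤ)) := by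
          rw [zpow_pow]
          congr 1
          have hcast : ((σ' i : ℤ)) * ((eB i : ℤ)) = (B : ℤ) := by exact_mod_cast heB i
          rw [mul_assoc, hcast]
        have hz'p : ((z' : Fin (n+1) → ℂ) i ^ (x * (σ i : ℤ))) ^ eB i
            = c⁻¹ ^ (x * (σ i : ℤ)) * (z : Fin (n+1) → ℂ) i ^ ((eA i : ℤ) * (x * (σ i : ℤ))) := by
          rw [zpow_pow, show (x * (σ i : ℤ)) * (eB i : ℤ) = (eB i : ℤ) * (x * (σ i : ℤ)) from
            mul_comm _ _, ← pow_zpow, hc' i, mul_zpow, pow_zpow]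
        have hcp : c⁻¹ ^ (x * (σ i : ℤ)) = (c⁻¹ ^ x) ^ σ i := (zpow_pow c⁻¹ x (σ i)).symm
        have hzc : (z : Fin (n+1) → ℂ) i ^ ((eA i : ℤ) * (x * (σ i : ℤ)))
            * (z : Fin (n+1) → ℂ) i ^ (y * (B : ℤ)) = (z : Fin (n+1) → ℂ) i := by
          rw [← zpow_add₀ h0]
          have hAe : ((eA i : ℤ)) * ((σ i : ℤ)) = (A : ℤ) := by exact_mod_cast hA'A i
          have hone : (eA i : ℤ) * (x * (σ i : ℤ)) + y * (B : ℤ) = 1 := by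
            linear_combination hxy + x * hAe
          rw [hone, zpow_one]
        calc (((κ : ℝ) : ℂ) ^ (σ i * σ' i) * ((z' : Fin (n+1) → ℂ) i ^ (x * (σ i : ℤ))
              * (z : Fin (n+1) → ℂ) i ^ (y * (σ' i : ℤ)))) ^ eB i
            = ((((κ : ℝ) : ℂ)) ^ (σ i * σ' i)) ^ eB i
              * (((z' : Fin (n+1) → ℂ) i ^ (x * (σ i : ℤ))) ^ eB i
                * ((z : Fin (n+1) → ℂ) i ^ (y * (σ' i : ℤ))) ^ eB i) := by
              rw [mul_pow, mul_pow]
          _ = (((κ : ℝ) : ℂ) ^ B) ^ σ i * (((c⁻¹ ^ x) ^ σ i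
              * (z : Fin (n+1) → ℂ) i ^ ((eA i : ℤ) * (x * (σ i : ℤ))))
                * (z : Fin (n+1) → ℂ) i ^ (y * (B : ℤ))) := by
              rw [hκp, hz'p, hzp, hcp]
          _ = ((((κ : ℝ) : ℂ) ^ B) ^ σ i * (c⁻¹ ^ x) ^ σ i)
              * ((z : Fin (n+1) → ℂ) i ^ ((eA i : ℤ) * (x * (σ i : ℤ)))
                * (z : Fin (n+1) → ℂ) i ^ (y * (B : ℤ))) := by
              ring
          _ = (((κ : ℝ) : ℂ) ^ B * c⁻¹ ^ x) ^ σ i * (z : Fin (n+1) → ℂ) i := by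
              rw [hzc, mul_pow]
    -- conclude via e1 and e2
    obtain ⟨W1, l1, hl1, hW1, hE1⟩ := emap_eval h1 hσ' eA hdE1 W
    obtain ⟨W2, l2, hl2, hW2, hE2⟩ := emap_eval h2 hσ eB hdE2 W
    have hrel1 : ∀ i, (W1 : Fin (n+1) → ℂ) i
        = (((l1 : ℝ) : ℂ) * (((κ : ℝ) : ℂ) ^ A * c ^ y)) ^ σ' i * (z' : Fin (n+1) → ℂ) i := by
      intro i
      rw [hW1 i, claim1 i, ← mul_assoc, ← mul_pow]
    have hrel2 : ∀ i, (W2 : Fin (n+1) → ℂ) i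
        = (((l2 : ℝ) : ℂ) * (((κ : ℝ) : ℂ) ^ B * c⁻¹ ^ x)) ^ σ i * (z : Fin (n+1) → ℂ) i := by
      intro i
      rw [hW2 i, claim2 i, ← mul_assoc, ← mul_pow]
    have habs1 : ‖((l1 : ℝ) : ℂ) * (((κ : ℝ) : ℂ) ^ A * c ^ y)‖ = 1 := by
      apply abs_coef_eq_one σ' (fun _ => 1) hσ' h1' z' W1
      intro i
      rw [pow_one, pow_one]
      exact hrel1 i
    have habs2 : ‖((l2 : ℝ) : ℂ) * (((κ : ℝ) : ℂ) ^ B * c⁻¹ ^ x)‖ = 1 := by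
      apply abs_coef_eq_one σ (fun _ => 1) hσ h1' z W2
      intro i
      rw [pow_one, pow_one]
      exact hrel2 i
    refine ⟨W, ?_, ?_⟩
    · rw [hE1]
      exact ((mk_eq_iff σ' z' W1).mpr ⟨_, habs1, hrel1⟩).symm
    · rw [hE2]
      exact ((mk_eq_iff σ z W2).mpr ⟨_, habs2, hrel2⟩).symm
  -- assembly
  haveI hT2' : T2Space (WP (n+1) σ') := wp_t2 σ'
  haveI hT2 : T2Space (WP (n+1) σ) := wp_t2 σ
  haveI := sph_compact (n+1)
  haveI : CompactSpace (WP (n+1) (fun i => σ i * σ' i)) := by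
    have h : IsCompact (Set.range (Quot.mk (wRel (n+1) (fun i => σ i * σ' i)))) :=
      isCompact_range continuous_quot_mk
    rw [Set.range_eq_univ.mpr Quot.mk_surjective] at h
    exact ⟨h⟩
  have hcomm : ∀ W : WP (n+1) (fun i => σ i * σ' i), q' (e1 W) = q (e2 W) := by
    intro W
    induction W using Quot.ind with
    | _ w => exact hcommS w
  set f : WP (n+1) (fun i => σ i * σ' i) → {p : WP (n+1) σ' × WP (n+1) σ // q' p.1 = q p.2} :=
    fun W => ⟨(e1 W, e2 W), hcomm W⟩ with hfdef
  have hbij : Function.Bijective f := by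
    constructor
    · intro a b hab
      obtain ⟨w, rfl⟩ := Quot.exists_rep a
      obtain ⟨v, rfl⟩ := Quot.exists_rep b
      have h := Subtype.ext_iff.mp hab
      have h1e : e1 (Quot.mk _ w) = e1 (Quot.mk _ v) := congrArg Prod.fst h
      have h2e : e2 (Quot.mk _ w) = e2 (Quot.mk _ v) := congrArg Prod.snd h
      exact hinj w v h1e h2e
    · rintro ⟨⟨p1, p2⟩, hp⟩
      obtain ⟨z', rfl⟩ := Quot.exists_rep p1
      obtain ⟨z, rfl⟩ := Quot.exists_rep p2
      obtain ⟨W, hWa, hWb⟩ := hsurjS z' z hp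
      exact ⟨wpMk (n+1) (fun i => σ i * σ' i) W, Subtype.ext (Prod.ext hWa hWb)⟩
  have hcont : Continuous f := Continuous.subtype_mk (h1.1.prodMk h2.1) _
  exact ⟨Continuous.homeoOfEquivCompactToT2 (f := Equiv.ofBijective f hbij) hcont,
    fun w => rfl⟩
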